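/- Let B ∈ SL(2,ℝ). If B maps the line spanned by its most expanded direction U(B) to the line orthogonal to it (i.e., B·U(B) = S(B) as elements of the projective line, where S(B) ⟂ U(B)), then tr B = 0 and consequently B² = −I. -/

import Mathlib

open Matrix

noncomputable def matCLM (B : Matrix (Fin 2) (Fin 2) ℝ) :
    EuclideanSpace ℝ (Fin 2) →L[ℝ] EuclideanSpace ℝ (Fin 2) :=
  Matrix.toEuclideanCLM (𝕜 := ℝ) B

lemma matCLM_apply (B : Matrix (Fin 2) (Fin 2) ℝ) (v : EuclideanSpace ℝ (Fin 2)) (i : Fin 2) :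
    matCLM B v i = B i 0 * v 0 + B i 1 * v 1 := by
  have := Matrix.ofLp_toEuclideanCLM (n := Fin 2) (𝕜 := ℝ) B v
  have h2 := congrFun this i
  simpa [Matrix.mulVec, dotProduct, Fin.sum_univ_two, matCLM] using h2

lemma norm_sq' (v : EuclideanSpace ℝ (Fin 2)) : ‖v‖^2 = v 0 ^2 + v 1 ^2 := by
  rw [EuclideanSpace.norm_eq, Real.sq_sqrt (by positivity)]
  simp [Fin.sum_univ_two, sq_abs]

lemma key_tr (p q r t u0 u1 e : ℝ) (he : e ≠ 0) (hu2 : u0^2+u1^2 = 1)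
    (hdet : p*t - q*r = 1)
    (h0 : p*u0 + q*u1 = -(e*u1)) (h1 : r*u0 + t*u1 = e*u0)
    (h6 : e^2 * ((q*u0-p*u1)^2 + (t*u0-r*u1)^2) = 1) : p + t = 0 := by
  have ha : e * (u0*(q*u0-p*u1) + u1*(t*u0-r*u1)) = -1 := by
    linear_combination (t*u0-r*u1)*h0 - (q*u0-p*u1)*h1 - (u0^2+u1^2)*hdet - hu2
  have hb2 : (e * (t*u0^2 - (q+r)*u0*u1 + p*u1^2))^2 = 0 := by
    linear_combination (u0^2+u1^2)*h6 + hu2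
      - (e*(u0*(q*u0-p*u1) + u1*(t*u0-r*u1)) - 1)*ha
  have hb' : e * (t*u0^2 - (q+r)*u0*u1 + p*u1^2) = 0 := by
    exact (pow_eq_zero_iff two_ne_zero).mp hb2
  have hb : t*u0^2 - (q+r)*u0*u1 + p*u1^2 = 0 := by
    rcases mul_eq_zero.mp hb' with h | h
    · exact absurd h he
    · exact h
  linear_combination hb + u0*h0 + u1*h1 - (p+t)*hu2

theorem stmt_12 (B : Matrix (Fin 2) (Fin 2) ℝ) (hB : B.det = 1)
    (hnorm : 1 < ‖matCLM B‖)
    (u s : EuclideanSpace ℝ (Fin 2)) (hu : ‖u‖ = 1) (hs : ‖s‖ = 1)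
    (hperp : inner (𝕜 := ℝ) u s = (0 : ℝ))
    (huexp : ‖matCLM B u‖ = ‖matCLM B‖)
    (hscon : ‖matCLM B s‖ = ‖matCLM B‖⁻¹)
    (hmap : ∃ c : ℝ, matCLM B u = c • s) :
    B.trace = 0 ∧ B * B = -1 := by
  obtain ⟨c, hc⟩ := hmap
  set p := B 0 0 with hp
  set q := B 0 1 with hq
  set r := B 1 0 with hr
  set t := B 1 1 with ht
  have hdet : p*t - q*r = 1 := by
    rw [Matrix.det_fin_two] at hB; linarith
  have hu2 : (u 0)^2 + (u 1)^2 = 1 := by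
    have := norm_sq' u; rw [hu] at this; linarith
  have hs2 : (s 0)^2 + (s 1)^2 = 1 := by
    have := norm_sq' s; rw [hs] at this; linarith
  have hperp' : u 0 * s 0 + u 1 * s 1 = 0 := by
    rw [PiLp.inner_apply, Fin.sum_univ_two] at hperp
    simpa [mul_comm] using hperp
  -- components of Bu = c • s
  have hc0 : p * u 0 + q * u 1 = c * s 0 := by
    have := congrFun (congrArg (fun v : EuclideanSpace ℝ (Fin 2) => (v : Fin 2 → ℝ)) hc) 0
    simpa [matCLM_apply] using this
  have hc1 : r * u 0 + t * u 1 = c * s 1 := by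
    have := congrFun (congrArg (fun v : EuclideanSpace ℝ (Fin 2) => (v : Fin 2 → ℝ)) hc) 1
    simpa [matCLM_apply] using this
  -- |c| = ‖B‖
  have hcn : |c| = ‖matCLM B‖ := by
    rw [← huexp, hc, norm_smul, hs, Real.norm_eq_abs, mul_one]
  have hc1' : 1 < |c| := hcn ▸ hnorm
  have hcne : c ≠ 0 := by
    intro h; rw [h, abs_zero] at hc1'; linarith
  -- e6
  have e6 : c^2 * ((p * s 0 + q * s 1)^2 + (r * s 0 + t * s 1)^2) = 1 := by
    have h1 : ‖matCLM B s‖^2 = (p * s 0 + q * s 1)^2 + (r * s 0 + t * s 1)^2 := by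
      rw [norm_sq', matCLM_apply, matCLM_apply]
    have h2 : ‖matCLM B s‖^2 = (|c|⁻¹)^2 := by rw [hscon, hcn]
    rw [h1] at h2
    rw [h2]
    field_simp [sq_abs]
    rw [sq_abs]
  -- d = ±1 and s in terms of u
  set d := u 0 * s 1 - u 1 * s 0 with hd
  have hd2 : d^2 = 1 := by
    linear_combination ((s 0)^2+(s 1)^2)*hu2 + hs2 - (u 0 * s 0 + u 1 * s 1)*hperp'
  have hs0 : s 0 = -d * u 1 := by
    linear_combination (-(s 0))*hu2 + (u 0)*hperp'
  have hs1 : s 1 = d * u 0 := by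
    linear_combination (-(s 1))*hu2 + (u 1)*hperp'
  have hdcases : d = 1 ∨ d = -1 := by
    rcases mul_eq_zero.mp (show (d - 1) * (d + 1) = 0 by linear_combination hd2) with h | h
    · left; linarith
    · right; linarith
  have htr : p + t = 0 := by
    rcases hdcases with h | h
    · refine key_tr p q r t (u 0) (u 1) c hcne hu2 hdet ?_ ?_ ?_
      · rw [hc0, hs0, h]; ring
      · rw [hc1, hs1, h]; ring
      · rw [hs0, hs1, h] at e6; linear_combination e6
    · refine key_tr p q r t (u 0) (u 1) (-c) (neg_ne_zero.mpr hcne) hu2 hdet ?_ ?_ ?_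
      · rw [hc0, hs0, h]; ring
      · rw [hc1, hs1, h]; ring
      · rw [hs0, hs1, h] at e6; linear_combination e6
  constructor
  · rw [Matrix.trace_fin_two]; linarith
  · ext i j
    fin_cases i <;> fin_cases j <;>
      simp only [Matrix.mul_apply, Fin.sum_univ_two, Matrix.neg_apply, Matrix.one_apply,
        Fin.isValue, ← hp, ← hq, ← hr, ← ht, if_true, if_false, Matrix.cons_val_zero,
        Matrix.cons_val_one, Matrix.head_cons]
    · norm_num; linear_combination p*htr - hdet
    · norm_num; linear_combination q*htr
    · norm_num; linear_combination r*htr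
    · norm_num; linear_combination t*htr - hdet
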